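/- Let 0 < a < b < c < d be integers. Then there exists a complex number z with |z| = 1 such that |1 + z^a + z^b + z^c + z^d| ≤ √3. -/

import Mathlib

open Complex Finset

theorem stmt_18 (a b c d : ℕ) (ha : 0 < a) (hab : a < b) (hbc : b < c) (hcd : c < d) :
    ∃ z : ℂ, ‖z‖ = 1 ∧
      ‖1 + z ^ a + z ^ b + z ^ c + z ^ d‖ ≤ Real.sqrt 3 := by
  have hd : 0 < d := ha.trans (hab.trans (hbc.trans hcd))
  have hdC : (d : ℂ) ≠ 0 := Nat.cast_ne_zero.mpr hd.ne'
  have hπ : (Real.pi : ℂ) ≠ 0 := Complex.ofReal_ne_zero.mpr Real.pi_ne_zero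
  set t : ℂ := (Real.pi / d : ℝ) * I with ht
  have hdt : (d : ℂ) * t = Real.pi * I := by
    rw [ht]; push_cast; field_simp
  set z : ℕ → ℂ := fun k => Complex.exp ((2 * k + 1 : ℕ) * t) with hz
  have habs : ∀ k, ‖z k‖ = 1 := by
    intro k
    have h1 : ((2 * k + 1 : ℕ) : ℂ) * t = (((2 * k + 1 : ℕ) : ℝ) * (Real.pi / d) : ℝ) * I := by
      rw [ht]; push_cast; ring
    rw [hz]; simp only [h1, Complex.norm_exp_ofReal_mul_I]
  have hne : ∀ k : ℕ, z k ≠ 0 := fun k => Complex.exp_ne_zero _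
  have h2pi : (2 : ℂ) * Real.pi * I ≠ 0 := by
    simp [hπ, Complex.I_ne_zero]
  -- key vanishing sum
  have key : ∀ m : ℤ, m ≠ 0 → m.natAbs < d → ∑ k ∈ range d, z k ^ m = 0 := by
    intro m hm0 hmd
    have hx1 : Complex.exp (2 * m * t) ≠ 1 := by
      intro hone
      rw [Complex.exp_eq_one_iff] at hone
      obtain ⟨n, hn⟩ := hone
      rw [ht] at hn
      push_cast at hn
      field_simp at hn
      have hmn : (m : ℂ) * (2 * Real.pi * I) = ((n * d : ℤ) : ℂ) * (2 * Real.pi * I) := by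
        push_cast
        linear_combination (2 * Real.pi * I) * hn
      have hmd' : m = n * d := by exact_mod_cast mul_right_cancel₀ h2pi hmn
      have hn0 : n ≠ 0 := by rintro rfl; simp at hmd'; exact hm0 hmd'
      have h1 : 1 ≤ n.natAbs := Int.natAbs_pos.mpr hn0
      have h2 : m.natAbs = n.natAbs * d := by rw [hmd', Int.natAbs_mul, Int.natAbs_natCast]
      have h3 : d ≤ n.natAbs * d := Nat.le_mul_of_pos_left d (by omega)
      omega
    have hterm : ∀ k : ℕ, z k ^ m = Complex.exp (m * t) * Complex.exp (2 * m * t) ^ k := by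
      intro k
      rw [hz]
      simp only
      rw [← Complex.exp_int_mul, ← Complex.exp_nat_mul, ← Complex.exp_add]
      congr 1
      push_cast
      ring
    have hxd : Complex.exp (2 * m * t) ^ d = 1 := by
      rw [← Complex.exp_nat_mul]
      have : (d : ℂ) * (2 * m * t) = (m : ℂ) * (2 * Real.pi * I) := by
        linear_combination (2 * (m : ℂ)) * hdt
      rw [this, Complex.exp_int_mul, Complex.exp_two_pi_mul_I, one_zpow]
    calc ∑ k ∈ range d, z k ^ m
        = Complex.exp (m * t) * ∑ k ∈ range d, Complex.exp (2 * m * t) ^ k := by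
          rw [Finset.mul_sum]; exact Finset.sum_congr rfl fun k _ => hterm k
      _ = 0 := by rw [geom_sum_eq hx1, hxd]; simp
  -- the three-term sums
  set w : ℕ → ℂ := fun k => z k ^ a + z k ^ b + z k ^ c with hw
  have hexp : ∀ k, w k * (starRingEnd ℂ) (w k)
      = 3 + (z k ^ ((b : ℤ) - a) + z k ^ ((a : ℤ) - b) + z k ^ ((c : ℤ) - a)
          + z k ^ ((a : ℤ) - c) + z k ^ ((c : ℤ) - b) + z k ^ ((b : ℤ) - c)) := by
    intro k
    have h0 := hne k
    have hc : ∀ n : ℤ, (starRingEnd ℂ) (z k ^ n) = z k ^ (-n) := by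
      intro n
      rw [← Complex.inv_eq_conj (by rw [norm_zpow, habs k, one_zpow]),
        ← zpow_neg]
    simp only [hw, map_add, hc, ← zpow_natCast (z k), add_mul, mul_add,
      ← zpow_add₀ h0, sub_eq_add_neg]
    rw [show (a:ℤ) + -(a:ℤ) = 0 by ring, show (b:ℤ) + -(b:ℤ) = 0 by ring,
      show (c:ℤ) + -(c:ℤ) = 0 by ring, zpow_zero]
    ring
  have hsum : ∑ k ∈ range d, w k * (starRingEnd ℂ) (w k) = 3 * d := by
    have e1 : ((b : ℤ) - a) ≠ 0 := by omega
    have e2 : ((b : ℤ) - a).natAbs < d := by omega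
    have e3 : ((a : ℤ) - b) ≠ 0 := by omega
    have e4 : ((a : ℤ) - b).natAbs < d := by omega
    have e5 : ((c : ℤ) - a) ≠ 0 := by omega
    have e6 : ((c : ℤ) - a).natAbs < d := by omega
    have e7 : ((a : ℤ) - c) ≠ 0 := by omega
    have e8 : ((a : ℤ) - c).natAbs < d := by omega
    have e9 : ((c : ℤ) - b) ≠ 0 := by omega
    have e10 : ((c : ℤ) - b).natAbs < d := by omega
    have e11 : ((b : ℤ) - c) ≠ 0 := by omega
    have e12 : ((b : ℤ) - c).natAbs < d := by omega
    rw [Finset.sum_congr rfl fun k _ => hexp k]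
    simp only [Finset.sum_add_distrib]
    rw [key _ e1 e2, key _ e3 e4, key _ e5 e6, key _ e7 e8, key _ e9 e10, key _ e11 e12]
    simp [Finset.sum_const, Finset.card_range, mul_comm]
  have hsum' : ∑ k ∈ range d, Complex.normSq (w k) = 3 * d := by
    have h1 : ((∑ k ∈ range d, Complex.normSq (w k) : ℝ) : ℂ) = ((3 * d : ℝ) : ℂ) := by
      push_cast
      have h2 : ∀ k : ℕ, (Complex.normSq (w k) : ℂ) = w k * (starRingEnd ℂ) (w k) :=
        fun k => (Complex.mul_conj (w k)).symm
      simp only [h2]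
      exact hsum
    exact_mod_cast h1
  have hpig : ∃ k ∈ range d, Complex.normSq (w k) ≤ 3 := by
    apply Finset.exists_le_of_sum_le ⟨0, Finset.mem_range.mpr hd⟩
    rw [hsum', Finset.sum_const, Finset.card_range, nsmul_eq_mul]
    apply le_of_eq
    ring
  obtain ⟨k, -, hk3⟩ := hpig
  refine ⟨z k, habs k, ?_⟩
  have hzd : z k ^ d = -1 := by
    rw [hz]
    simp only
    rw [← Complex.exp_nat_mul]
    have h1 : (d : ℂ) * (((2 * k + 1 : ℕ) : ℂ) * t) = ((2 * k + 1 : ℕ) : ℂ) * (Real.pi * I) := by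
      rw [← hdt]; ring
    rw [h1, Complex.exp_nat_mul, Complex.exp_pi_mul_I]
    exact Odd.neg_one_pow ⟨k, by omega⟩
  have heq : (1 : ℂ) + z k ^ a + z k ^ b + z k ^ c + z k ^ d = w k := by
    rw [hzd, hw]; ring
  rw [heq, Complex.norm_def]
  exact Real.sqrt_le_sqrt hk3
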